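/- Let V be a finite nonempty set. Define the blow-up T̃ of the simplex on V as the set of families (λ^K)_{K}, indexed by the nonempty subsets K ⊆ V, with λ^K ∈ ℝ^K, λ^K_i ≥ 0 for all i ∈ K, satisfying: ∑_{i∈K} λ^K_i = 1 for every nonempty K ⊆ V, and λ^H_i = (∑_{i'∈K} λ^H_{i'}) · λ^K_i for all nonempty K ⊆ H ⊆ V and all i ∈ K. Then for every λ ∈ ℝ^V with λ_i > 0 for all i and ∑_{i∈V} λ_i = 1, there exists exactly one family (λ^K) ∈ T̃ with λ^V = λ, and it is given by λ^K_i = λ_i / ∑_{i'∈K} λ_{i'}. -/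

import Mathlib

/-- The blow-up `T̃` of the simplex on a finite set `α`: families `(λ^K)_K` indexed by the
subsets `K ⊆ α` (the component at `K = ∅` carries no data), with `λ^K ∈ ℝ^K`
componentwise nonnegative, `∑_{i∈K} λ^K_i = 1` for every nonempty `K`, and
`λ^H_i = (∑_{i'∈K} λ^H_{i'}) · λ^K_i` for all nonempty `K ⊆ H` and `i ∈ K`. -/
def blowUp (α : Type*) [Fintype α] [DecidableEq α] :
    Set ((K : Finset α) → ({i // i ∈ K} → ℝ)) :=
  {L | (∀ K : Finset α, K.Nonempty →
          (∀ i : {i // i ∈ K}, 0 ≤ L K i) ∧ ∑ i : {i // i ∈ K}, L K i = 1) ∧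
       ∀ (K H : Finset α), K.Nonempty → ∀ (hKH : K ⊆ H) (i : α) (hi : i ∈ K),
         L H ⟨i, hKH hi⟩ =
           (∑ i' : {i' // i' ∈ K}, L H ⟨i'.1, hKH i'.2⟩) * L K ⟨i, hi⟩}

/-- For every `λ` in the open simplex on `V` there is exactly one point
of the blow-up `T̃` lying over it (i.e. with `λ^V = λ`), and it is given by
`λ^K_i = λ_i / ∑_{i'∈K} λ_{i'}`. -/
theorem statement15 {V : Type*} [Fintype V] [DecidableEq V] [Nonempty V]
    (l : V → ℝ) (hpos : ∀ i, 0 < l i) (hsum : ∑ i, l i = 1) :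
    (∃! L : (K : Finset V) → ({i // i ∈ K} → ℝ),
      L ∈ blowUp V ∧ ∀ i : V, L Finset.univ ⟨i, Finset.mem_univ i⟩ = l i) ∧
    (∀ L : (K : Finset V) → ({i // i ∈ K} → ℝ),
      L ∈ blowUp V → (∀ i : V, L Finset.univ ⟨i, Finset.mem_univ i⟩ = l i) →
      ∀ (K : Finset V) (i : V) (hi : i ∈ K), L K ⟨i, hi⟩ = l i / ∑ i' ∈ K, l i') := by
  have hspos : ∀ K : Finset V, K.Nonempty → 0 < ∑ i' ∈ K, l i' :=
    fun K hK => Finset.sum_pos (fun i _ => hpos i) hK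
  -- the formula part
  have hform : ∀ L : (K : Finset V) → ({i // i ∈ K} → ℝ),
      L ∈ blowUp V → (∀ i : V, L Finset.univ ⟨i, Finset.mem_univ i⟩ = l i) →
      ∀ (K : Finset V) (i : V) (hi : i ∈ K), L K ⟨i, hi⟩ = l i / ∑ i' ∈ K, l i' := by
    intro L hL hfib K i hi
    have hKne : K.Nonempty := ⟨i, hi⟩
    have hcomp := hL.2 K Finset.univ hKne (Finset.subset_univ K) i hi
    have hsumK : (∑ i' : {i' // i' ∈ K}, L Finset.univ ⟨i'.1, Finset.mem_univ i'.1⟩)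
        = ∑ i' ∈ K, l i' := by
      rw [show (∑ i' : {i' // i' ∈ K}, L Finset.univ ⟨i'.1, Finset.mem_univ i'.1⟩)
          = ∑ i' : {i' // i' ∈ K}, l i'.1 from Finset.sum_congr rfl
            (fun x _ => hfib x.1)]
      exact Finset.sum_attach K l
    rw [hfib i, hsumK] at hcomp
    have hne : (∑ i' ∈ K, l i') ≠ 0 := (hspos K hKne).ne'
    field_simp [hne]
    linarith [hcomp]
  refine ⟨⟨fun K i => l i.1 / ∑ i' ∈ K, l i', ⟨⟨?_, ?_⟩, ?_⟩, ?_⟩, hform⟩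
  · -- membership: nonneg and sum 1
    intro K hK
    have hs := hspos K hK
    constructor
    · exact fun i => div_nonneg (hpos i.1).le hs.le
    · rw [← Finset.sum_div]
      rw [show (∑ i : {i // i ∈ K}, l i.1) = ∑ i' ∈ K, l i' from Finset.sum_attach K l]
      exact div_self hs.ne'
  · -- compatibility
    intro K H hK hKH i hi
    have hH : H.Nonempty := ⟨i, hKH hi⟩
    have hsK := hspos K hK
    have hsH := hspos H hH
    rw [show (∑ i' : {i' // i' ∈ K}, l i'.1 / ∑ i'' ∈ H, l i'')
        = (∑ i' ∈ K, l i') / ∑ i'' ∈ H, l i'' by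
      rw [← Finset.sum_div,
        show (∑ i' : {i' // i' ∈ K}, l i'.1) = ∑ i' ∈ K, l i' from Finset.sum_attach K l]]
    field_simp
  · -- lies over l
    intro i
    simp [hsum]
  · -- uniqueness
    intro L ⟨hL, hfib⟩
    funext K
    funext i
    exact hform L hL hfib K i.1 i.2
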